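/- In the slope-extension construction, let x̄ ∈ C, y ∈ X, and k ∈ ℤ be such that f(x̄) ≤ f(y) and ε_{k−3} ≤ d(x̄,y) < ε_{k−2}. Then (f(y) − f(x̄)) / d(x̄,y) ≤ S_{k−1}^c(x̄) + 3L·ε_{k−3}/ε_{k−2}. -/

import Mathlib

open Metric

set_option maxHeartbeats 1600000 in
/-- In the slope-extension construction, if `x̄ ∈ C`, `y ∈ X`, `f(x̄) ≤ f(y)` and
`ε_{k−3} ≤ d(x̄,y) < ε_{k−2}`, then
`(f(y) − f(x̄))/d(x̄,y) ≤ S_{k−1}^c(x̄) + 3L·ε_{k−3}/ε_{k−2}`. -/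
theorem incremental_ratio_upper_bound
    {X : Type*} [MetricSpace X] (C : Set X) (hC : C.Nonempty)
    (g : X → ℝ) (L ε : ℝ) (hL : 0 < L) (hε : 0 < ε) (hεL : ε ≤ L)
    (hg : ∀ x ∈ C, ∀ y ∈ C, |g x - g y| ≤ L * dist x y)
    (e : ℤ → ℝ) (he : ∀ k : ℤ, 0 < e k)
    (hmono : ∀ k : ℤ, e (k - 1) / e k ≤ e k / e (k + 1))
    (hlim : Filter.Tendsto (fun k : ℤ => e (k - 1) / e k) Filter.atBot (nhds 0))
    (hratio : ∀ k : ℤ, e (k - 1) / e k ≤ ε / (3 * (L + ε)))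
    (S : X → ℤ → ℝ)
    (hS : ∀ x ∈ C, ∀ k : ℤ,
      S x k = sInf {ℓ : ℝ | 0 ≤ ℓ ∧ ∀ z ∈ C, dist z x < e k → |g z - g x| ≤ ℓ * dist x z})
    (pen : X → ℝ → ℝ)
    (hpen0 : ∀ x ∈ C, pen x 0 = 0)
    (hpennonneg : ∀ x ∈ C, ∀ t : ℝ, 0 ≤ t → 0 ≤ pen x t)
    (hpencont : ∀ x ∈ C, ContinuousOn (pen x) (Set.Ici 0))
    (hpenlin : ∀ x ∈ C, ∀ k : ℤ, ∀ s t : ℝ, e (k - 2) ≤ s → s ≤ t → t ≤ e (k - 1) →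
      pen x t - pen x s = (S x k + 3 * L * (e (k - 2) / e (k - 1))) * (t - s))
    (f : X → ℝ)
    (hf : ∀ y : X, f y = sInf ((fun x => g x + pen x (dist x y)) '' C))
    (xb : X) (hxb : xb ∈ C) (y : X) (k : ℤ)
    (hfy : f xb ≤ f y)
    (hd1 : e (k - 3) ≤ dist xb y) (hd2 : dist xb y < e (k - 2)) :
    (f y - f xb) / dist xb y ≤ S xb (k - 1) + 3 * L * (e (k - 3) / e (k - 2)) := by
  classical
  have hL0 : (0:ℝ) ≤ L := hL.le
  -- geometric growth of e
  have hR : ∀ m : ℤ, 6 * e (m - 1) ≤ e m := by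
    intro m
    have h1 := hratio m
    have h2 : ε / (3 * (L + ε)) ≤ 1 / 6 := by
      rw [div_le_div_iff₀ (by linarith) (by norm_num)]
      linarith
    have h3 := (div_le_iff₀ (he m)).mp (h1.trans h2)
    linarith
  have emono : ∀ j m : ℤ, j ≤ m → e j ≤ e m := by
    intro j m h
    obtain ⟨n, rfl⟩ : ∃ n : ℕ, m = j + n := ⟨(m - j).toNat, by omega⟩
    clear h
    induction n with
    | zero => simp
    | succ n ih =>
      have h6 := hR (j + (n:ℤ) + 1)
      have h1 : (j:ℤ) + (n:ℤ) + 1 - 1 = j + (n:ℤ) := by ring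
      rw [h1] at h6
      have h2 : (j:ℤ) + ((n:ℕ) + 1 : ℕ) = j + (n:ℤ) + 1 := by push_cast; ring
      rw [h2]
      nlinarith [he (j + (n:ℤ))]
  have emonolt : ∀ j m : ℤ, j < m → e j < e m := by
    intro j m h
    have h1 : e j ≤ e (m - 1) := emono _ _ (by omega)
    have h6 := hR m
    nlinarith [he (m - 1)]
  -- the defining set for S
  set T : X → ℤ → Set ℝ :=
    fun x m => {ℓ : ℝ | 0 ≤ ℓ ∧ ∀ z ∈ C, dist z x < e m → |g z - g x| ≤ ℓ * dist x z} with hT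
  have hTL : ∀ x ∈ C, ∀ m : ℤ, L ∈ T x m := by
    intro x hx m
    refine ⟨hL0, fun z hz _ => ?_⟩
    have := hg z hz x hx
    rwa [dist_comm x z]
  have hTbdd : ∀ x m, BddBelow (T x m) := fun x m => ⟨0, fun ℓ hℓ => hℓ.1⟩
  have hS0 : ∀ x ∈ C, ∀ m : ℤ, 0 ≤ S x m := by
    intro x hx m
    rw [hS x hx m]
    exact le_csInf ⟨L, hTL x hx m⟩ (fun b hb => hb.1)
  have hSL : ∀ x ∈ C, ∀ m : ℤ, S x m ≤ L := by
    intro x hx m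
    rw [hS x hx m]
    exact csInf_le (hTbdd x m) (hTL x hx m)
  have hSmono : ∀ x ∈ C, ∀ j m : ℤ, j ≤ m → S x j ≤ S x m := by
    intro x hx j m h
    rw [hS x hx j, hS x hx m]
    refine csInf_le_csInf (hTbdd x j) ⟨L, hTL x hx m⟩ ?_
    rintro ℓ ⟨h0, hℓ⟩
    exact ⟨h0, fun z hz hd => hℓ z hz (hd.trans_le (emono j m h))⟩
  have hSapply : ∀ x ∈ C, ∀ m : ℤ, ∀ z ∈ C, dist z x < e m →
      |g z - g x| ≤ S x m * dist x z := by
    intro x hx m z hz hd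
    rcases eq_or_lt_of_le (dist_nonneg : (0:ℝ) ≤ dist x z) with h0 | h0
    · have hzx : z = x := by rw [← dist_eq_zero, dist_comm]; exact h0.symm
      simp [hzx, ← h0]
    · have hlb : |g z - g x| / dist x z ≤ S x m := by
        rw [hS x hx m]
        refine le_csInf ⟨L, hTL x hx m⟩ ?_
        rintro ℓ ⟨hℓ0, hℓ⟩
        rw [div_le_iff₀ h0]
        exact hℓ z hz hd
      calc |g z - g x| = |g z - g x| / dist x z * dist x z := by field_simp
        _ ≤ S x m * dist x z := by
            exact mul_le_mul_of_nonneg_right hlb (le_of_lt h0)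
  -- linearity on the segment [e (m-1), e m] with slope S x (m+1) + 3L e(m-1)/e m
  have hseg : ∀ x ∈ C, ∀ m : ℤ, ∀ s t : ℝ, e (m - 1) ≤ s → s ≤ t → t ≤ e m →
      pen x t - pen x s = (S x (m + 1) + 3 * L * (e (m - 1) / e m)) * (t - s) := by
    intro x hx m s t h1 h2 h3
    have := hpenlin x hx (m + 1) s t
    have e1 : (m:ℤ) + 1 - 2 = m - 1 := by ring
    have e2 : (m:ℤ) + 1 - 1 = m := by ring
    rw [e1, e2] at this
    exact this h1 h2 h3
  -- P1
  have penP1 : ∀ x ∈ C, ∀ m : ℤ, S x (m + 1) * e m + L * e (m - 1) ≤ pen x (e m) := by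
    intro x hx m
    have hlin := hseg x hx m (e (m - 1)) (e m) le_rfl
      (emono _ _ (by omega)) le_rfl
    have hp0 : 0 ≤ pen x (e (m - 1)) := hpennonneg x hx _ (he _).le
    have hb := he m
    have ha := he (m - 1)
    have h6 := hR m
    have hq : e (m - 1) / e m * e m = e (m - 1) := div_mul_cancel₀ _ hb.ne'
    have hSl := hSL x hx (m + 1)
    have hS0' := hS0 x hx (m + 1)
    nlinarith [mul_pos ha hb, div_nonneg ha.le hb.le,
      mul_le_mul_of_nonneg_left (hR m) (div_nonneg ha.le hb.le)]
  -- P2 : on [e (m-1), e m], pen dominates S x m * s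
  have penP2 : ∀ x ∈ C, ∀ m : ℤ, ∀ s : ℝ, e (m - 1) ≤ s → s ≤ e m →
      S x m * s ≤ pen x s := by
    intro x hx m s h1 h2
    have hlin := hseg x hx m (e (m - 1)) s le_rfl h1 h2
    have hp1 := penP1 x hx (m - 1)
    have e1 : (m:ℤ) - 1 + 1 = m := by ring
    have e2 : (m:ℤ) - 1 - 1 = m - 2 := by ring
    rw [e1, e2] at hp1
    have hmm := hSmono x hx m (m + 1) (by omega)
    have hq : (0:ℝ) ≤ 3 * L * (e (m - 1) / e m) :=
      mul_nonneg (by linarith) (div_nonneg (he _).le (he _).le)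
    have hS0' := hS0 x hx m
    nlinarith [he (m - 2), mul_nonneg hq (sub_nonneg.mpr h1),
      mul_le_mul_of_nonneg_right hmm (sub_nonneg.mpr h1)]
  -- P2' : on [e (m-2), e (m-1)] with e (m-1) ≤ 2 t, pen dominates S x m * t
  have penP2' : ∀ x ∈ C, ∀ m : ℤ, ∀ t : ℝ, e (m - 2) ≤ t → t ≤ e (m - 1) →
      e (m - 1) ≤ 2 * t → S x m * t ≤ pen x t := by
    intro x hx m t h1 h2 h3
    have e2 : (m:ℤ) - 1 - 1 = m - 2 := by ring
    have e3 : (m:ℤ) - 1 + 1 = m := by ring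
    have hlin := hseg x hx (m - 1) (e (m - 2)) t (by rw [e2]) h1 h2
    rw [e2, e3] at hlin
    have hp0 : 0 ≤ pen x (e (m - 2)) := hpennonneg x hx _ (he _).le
    have h6 := hR (m - 1)
    rw [e2] at h6
    have hq : e (m - 2) / e (m - 1) * e (m - 1) = e (m - 2) :=
      div_mul_cancel₀ _ (he _).ne'
    have hSl := hSL x hx m
    have hq0 : (0:ℝ) ≤ e (m - 2) / e (m - 1) := div_nonneg (he _).le (he _).le
    have h7 : e (m - 1) ≤ 3 * (t - e (m - 2)) := by linarith
    have h8 : e (m - 2) ≤ 3 * (e (m - 2) / e (m - 1) * (t - e (m - 2))) := by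
      have h9 := mul_le_mul_of_nonneg_left h7 hq0
      nlinarith
    have h10 : S x m * e (m - 2) ≤ L * e (m - 2) :=
      mul_le_mul_of_nonneg_right hSl (he _).le
    nlinarith [mul_nonneg hL0
      (by linarith : (0:ℝ) ≤ 3 * (e (m - 2) / e (m - 1) * (t - e (m - 2))) - e (m - 2))]
  -- decay of e towards -∞
  have hdecay : ∀ M : ℤ, ∀ n : ℕ, e (M - n) ≤ e M * (1 / 6) ^ n := by
    intro M n
    induction n with
    | zero => simp
    | succ n ih =>
      have h6 := hR (M - n)
      have h1 : (M:ℤ) - (n:ℕ) - 1 = M - ((n:ℕ) + 1 : ℕ) := by push_cast; ring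
      rw [h1] at h6
      have : e (M - ((n:ℕ) + 1 : ℕ)) ≤ e (M - n) / 6 := by linarith
      calc e (M - ((n:ℕ) + 1 : ℕ)) ≤ e (M - n) / 6 := this
        _ ≤ e M * (1 / 6) ^ n / 6 := by linarith
        _ = e M * (1 / 6) ^ ((n:ℕ) + 1) := by ring
  -- existence of a segment containing any positive u
  have hexist : ∀ u : ℝ, 0 < u → ∃ j : ℤ, e (j - 1) ≤ u ∧ u < e j := by
    intro u hu
    -- lower bound index
    obtain ⟨n0, hn0⟩ : ∃ n : ℕ, e ((0:ℤ) - n) ≤ u := by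
      obtain ⟨n, hn⟩ := exists_pow_lt_of_lt_one (div_pos hu (he 0)) (by norm_num : (1:ℝ)/6 < 1)
      refine ⟨n, ?_⟩
      have h2 : (1 / 6:ℝ) ^ n * e 0 < u := (lt_div_iff₀ (he 0)).mp hn
      have h3 := hdecay 0 n
      linarith
    -- upper bound index
    have hgrow : ∀ n : ℕ, e ((0:ℤ) - n0) * 6 ^ n ≤ e ((0:ℤ) - n0 + n) := by
      intro n
      induction n with
      | zero => simp
      | succ n ih =>
        have h6 := hR ((0:ℤ) - n0 + n + 1)
        have h1 : (0:ℤ) - n0 + n + 1 - 1 = (0:ℤ) - n0 + n := by ring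
        rw [h1] at h6
        have h2 : (0:ℤ) - n0 + ((n:ℕ) + 1 : ℕ) = (0:ℤ) - n0 + n + 1 := by push_cast; ring
        rw [h2, pow_succ]
        nlinarith [pow_nonneg (by norm_num : (0:ℝ) ≤ 6) n, he ((0:ℤ) - n0 + n)]
    have hP : ∃ n : ℕ, u < e ((0:ℤ) - n0 + n) := by
      obtain ⟨n, hn⟩ := pow_unbounded_of_one_lt (u / e ((0:ℤ) - n0)) (by norm_num : (1:ℝ) < 6)
      refine ⟨n, ?_⟩
      rw [div_lt_iff₀ (he _)] at hn
      calc u < 6 ^ n * e ((0:ℤ) - n0) := hn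
        _ = e ((0:ℤ) - n0) * 6 ^ n := by ring
        _ ≤ e ((0:ℤ) - n0 + n) := hgrow n
    set n := Nat.find hP with hn
    have hspec : u < e ((0:ℤ) - n0 + n) := Nat.find_spec hP
    have hnpos : n ≠ 0 := by
      intro h
      rw [h] at hspec
      have h0 : ((0:ℤ) - n0 + ((0:ℕ):ℤ)) = (0:ℤ) - n0 := by push_cast; ring
      rw [h0] at hspec
      linarith
    have hprev : ¬ u < e ((0:ℤ) - n0 + (n - 1 : ℕ)) := Nat.find_min hP (Nat.pred_lt hnpos)
    push_neg at hprev
    refine ⟨(0:ℤ) - n0 + n, ?_, hspec⟩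
    have h1 : (0:ℤ) - n0 + n - 1 = (0:ℤ) - n0 + (n - 1 : ℕ) := by
      have := Nat.succ_pred_eq_of_pos (Nat.pos_of_ne_zero hnpos)
      push_cast [Nat.cast_sub (Nat.one_le_iff_ne_zero.mpr hnpos)]
      ring
    rw [h1]
    exact hprev
  -- the key lower bound
  have hLB : ∀ w : X, ∀ x ∈ C, g xb - 3 * L * dist xb w ≤ g x + pen x (dist x w) := by
    intro w x hx
    have htri : dist x xb ≤ dist x w + dist xb w := by
      calc dist x xb ≤ dist x w + dist w xb := dist_triangle x w xb
        _ = dist x w + dist xb w := by rw [dist_comm w xb]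
    have ht0 : (0:ℝ) ≤ dist x w := dist_nonneg
    have hD0 : (0:ℝ) ≤ dist xb w := dist_nonneg
    rcases eq_or_lt_of_le (dist_nonneg : (0:ℝ) ≤ dist x xb) with h0 | h0
    · have hxx : x = xb := by rw [← dist_eq_zero]; exact h0.symm
      subst hxx
      have := hpennonneg x hx (dist x w) ht0
      have := mul_nonneg hL0 hD0
      linarith
    · obtain ⟨j, hj1, hj2⟩ := hexist (dist x xb) h0
      have hgb : |g xb - g x| ≤ S x j * dist x xb := by
        refine hSapply x hx j xb hxb ?_
        rwa [dist_comm xb x]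
      have hgx : g xb - S x j * dist x xb ≤ g x := by
        have := abs_le.mp hgb
        linarith [this.1, this.2]
      have hSj0 := hS0 x hx j
      have hSjL := hSL x hx j
      by_cases hte : e (j - 1) ≤ dist x w
      · have htpos : 0 < dist x w := lt_of_lt_of_le (he (j - 1)) hte
        obtain ⟨m, hm1, hm2⟩ := hexist (dist x w) htpos
        have hmj : j ≤ m := by
          by_contra hcon
          push_neg at hcon
          have : e m ≤ e (j - 1) := emono _ _ (by omega)
          linarith
        have hpt : S x m * dist x w ≤ pen x (dist x w) := penP2 x hx m _ hm1 hm2.le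
        have hSm := hSmono x hx j m hmj
        have hSmL := hSL x hx m
        have hSm0 := hS0 x hx m
        linarith [mul_le_mul_of_nonneg_right hSm (dist_nonneg : (0:ℝ) ≤ dist x xb),
          mul_le_mul_of_nonneg_left htri hSm0,
          mul_le_mul_of_nonneg_right hSmL hD0, mul_nonneg hL0 hD0]
      · push_neg at hte
        by_cases h2D : e (j - 1) ≤ 2 * dist xb w
        · have hgL : |g xb - g x| ≤ L * dist x xb := by
            have := hg xb hxb x hx
            rwa [dist_comm xb x] at this
          have hp := hpennonneg x hx (dist x w) ht0
          have habs := abs_le.mp hgL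
          linarith [habs.1, mul_le_mul_of_nonneg_left htri hL0,
            mul_le_mul_of_nonneg_left hte.le hL0, mul_le_mul_of_nonneg_left h2D hL0]
        · push_neg at h2D
          have ht2 : e (j - 1) ≤ 2 * dist x w := by linarith
          have h6 := hR (j - 1)
          have e2 : (j:ℤ) - 1 - 1 = j - 2 := by ring
          rw [e2] at h6
          have hte2 : e (j - 2) ≤ dist x w := by linarith
          have hpt : S x j * dist x w ≤ pen x (dist x w) :=
            penP2' x hx j _ hte2 hte.le ht2
          linarith [mul_le_mul_of_nonneg_left htri hSj0,
            mul_le_mul_of_nonneg_right hSjL hD0, mul_nonneg hL0 hD0]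
  -- telescoping bound
  have htel : ∀ n : ℕ, pen xb (e (k - 3)) ≤ pen xb (e (k - 3 - n)) +
      S xb (k - 1) * (e (k - 3) - e (k - 3 - n)) + 3 * L * (e (k - 4) - e (k - 4 - n)) := by
    intro n
    induction n with
    | zero => push_cast; simp
    | succ n ih =>
      have c1 : (k:ℤ) - 3 - ((n:ℕ) + 1 : ℕ) = k - 4 - n := by push_cast; ring
      have c2 : (k:ℤ) - 4 - ((n:ℕ) + 1 : ℕ) = k - 5 - n := by push_cast; ring
      rw [c1, c2]
      have e1 : (k:ℤ) - 3 - n - 1 = k - 4 - n := by ring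
      have e2 : (k:ℤ) - 3 - n + 1 = k - 2 - n := by ring
      have hstep := hseg xb hxb (k - 3 - n) (e (k - 3 - n - 1)) (e (k - 3 - n)) le_rfl
        (emono _ _ (by omega)) le_rfl
      rw [e1, e2] at hstep
      have hm := hmono (k - 4 - (n:ℤ))
      have e3 : (k:ℤ) - 4 - n - 1 = k - 5 - n := by ring
      have e4 : (k:ℤ) - 4 - n + 1 = k - 3 - n := by ring
      rw [e3, e4] at hm
      have hcb : e (k - 5 - (n:ℤ)) * e (k - 3 - n) ≤ e (k - 4 - n) ^ 2 := by
        have := (div_le_div_iff₀ (he (k - 4 - (n:ℤ))) (he (k - 3 - (n:ℤ)))).mp hm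
        nlinarith
      have hq : e (k - 4 - (n:ℤ)) / e (k - 3 - n) * e (k - 3 - n) = e (k - 4 - n) :=
        div_mul_cancel₀ _ (he _).ne'
      have hrb : e (k - 4 - (n:ℤ)) / e (k - 3 - n) * (e (k - 3 - n) - e (k - 4 - n)) ≤
          e (k - 4 - n) - e (k - 5 - n) := by
        nlinarith [he (k - 3 - (n:ℤ)), he (k - 4 - (n:ℤ)), he (k - 5 - (n:ℤ))]
      have hSm := hSmono xb hxb (k - 2 - n) (k - 1) (by omega)
      have hlen : (0:ℝ) ≤ e (k - 3 - (n:ℤ)) - e (k - 4 - n) :=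
        sub_nonneg.mpr (emono _ _ (by omega))
      have h3L : (0:ℝ) ≤ 3 * L := by linarith
      calc pen xb (e (k - 3)) ≤ pen xb (e (k - 3 - n)) +
            S xb (k - 1) * (e (k - 3) - e (k - 3 - n)) +
            3 * L * (e (k - 4) - e (k - 4 - n)) := ih
        _ ≤ pen xb (e (k - 4 - n)) + S xb (k - 1) * (e (k - 3) - e (k - 4 - n)) +
            3 * L * (e (k - 4) - e (k - 5 - n)) := by
            linarith [hstep, mul_le_mul_of_nonneg_right hSm hlen,
              mul_le_mul_of_nonneg_left hrb h3L]
  -- limits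
  have hdec3 : Filter.Tendsto (fun n : ℕ => e (k - 3 - n)) Filter.atTop (nhds 0) := by
    apply squeeze_zero (fun n => (he _).le) (fun n => hdecay (k - 3) n)
    have := (tendsto_pow_atTop_nhds_zero_of_lt_one (by norm_num : (0:ℝ) ≤ 1/6)
      (by norm_num : (1/6:ℝ) < 1)).const_mul (e (k - 3))
    simpa [mul_comm] using this
  have hdec4 : Filter.Tendsto (fun n : ℕ => e (k - 4 - n)) Filter.atTop (nhds 0) := by
    apply squeeze_zero (fun n => (he _).le) (fun n => hdecay (k - 4) n)
    have := (tendsto_pow_atTop_nhds_zero_of_lt_one (by norm_num : (0:ℝ) ≤ 1/6)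
      (by norm_num : (1/6:ℝ) < 1)).const_mul (e (k - 4))
    simpa [mul_comm] using this
  have hpenc : Filter.Tendsto (fun n : ℕ => pen xb (e (k - 3 - n))) Filter.atTop (nhds 0) := by
    have hc : ContinuousWithinAt (pen xb) (Set.Ici 0) 0 := (hpencont xb hxb) 0 Set.self_mem_Ici
    have h1 : Filter.Tendsto (fun n : ℕ => e (k - 3 - n)) Filter.atTop
        (nhdsWithin 0 (Set.Ici (0:ℝ))) :=
      tendsto_nhdsWithin_of_tendsto_nhds_of_eventually_within _ hdec3
        (Filter.Eventually.of_forall (fun n => (he _).le))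
    have h2 := hc.tendsto.comp h1
    simpa [Function.comp_def, hpen0 xb hxb] using h2
  have hkey : pen xb (e (k - 3)) ≤ S xb (k - 1) * e (k - 3) + 3 * L * e (k - 4) := by
    have hlimit : Filter.Tendsto (fun n : ℕ => pen xb (e (k - 3 - n)) +
        S xb (k - 1) * (e (k - 3) - e (k - 3 - n)) + 3 * L * (e (k - 4) - e (k - 4 - n)))
        Filter.atTop
        (nhds (0 + S xb (k - 1) * (e (k - 3) - 0) + 3 * L * (e (k - 4) - 0))) :=
      (hpenc.add ((tendsto_const_nhds.sub hdec3).const_mul _)).add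
        ((tendsto_const_nhds.sub hdec4).const_mul _)
    have h2 := ge_of_tendsto hlimit (Filter.Eventually.of_forall htel)
    simpa using h2
  -- assembling everything
  have hd0 : 0 < dist xb y := lt_of_lt_of_le (he (k - 3)) hd1
  have hfxb : g xb ≤ f xb := by
    rw [hf xb]
    refine le_csInf ⟨g xb + pen xb (dist xb xb), Set.mem_image_of_mem _ hxb⟩ ?_
    rintro b ⟨x, hx, rfl⟩
    have := hLB xb x hx
    simpa [dist_self] using this
  have hbdd : BddBelow ((fun x => g x + pen x (dist x y)) '' C) := by
    refine ⟨g xb - 3 * L * dist xb y, ?_⟩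
    rintro b ⟨x, hx, rfl⟩
    exact hLB y x hx
  have hfyle : f y ≤ g xb + pen xb (dist xb y) := by
    rw [hf y]
    exact csInf_le hbdd ⟨xb, hxb, rfl⟩
  have e1 : (k:ℤ) - 1 - 2 = k - 3 := by ring
  have e2 : (k:ℤ) - 1 - 1 = k - 2 := by ring
  have hlin := hpenlin xb hxb (k - 1) (e (k - 3)) (dist xb y) (by rw [e1]) hd1
    (by rw [e2]; exact hd2.le)
  rw [e1, e2] at hlin
  have hm := hmono (k - 3)
  have e3 : (k:ℤ) - 3 - 1 = k - 4 := by ring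
  have e4 : (k:ℤ) - 3 + 1 = k - 2 := by ring
  rw [e3, e4] at hm
  have hcross := (div_le_div_iff₀ (he (k - 3)) (he (k - 2))).mp hm
  have h5 : e (k - 4) ≤ e (k - 3) / e (k - 2) * e (k - 3) := by
    rw [div_mul_eq_mul_div, le_div_iff₀ (he (k - 2))]
    linarith
  have h4 : 3 * L * e (k - 4) ≤ 3 * L * (e (k - 3) / e (k - 2)) * e (k - 3) := by
    have := mul_le_mul_of_nonneg_left h5 (by linarith : (0:ℝ) ≤ 3 * L)
    linarith
  rw [div_le_iff₀ hd0]
  nlinarith [hlin, hkey, h4, hfyle, hfxb]
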